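/- Let A(x) ∈ M_r(ℂ[x]) be such that its characteristic polynomial det(y·I_r − A(x)) is irreducible as a polynomial in y over ℂ(x). If g(x) ∈ G_r satisfies g(x)⁻¹A(x)g(x) = A(x), then g(x) = I_r. (That is, G_r acts freely on the set of A(x) with irreducible characteristic polynomial.) -/
import Mathlib


open Polynomial Matrix

noncomputable section

/-- The space `M(r,d)` of polynomial matrices, with `r = n+2`. -/
def Mrd (n d : ℕ) (A : Matrix (Fin (n+2)) (Fin (n+2)) (Polynomial ℂ)) : Prop :=
  (A 0 0).degree ≤ (d : WithBot ℕ) ∧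
  (∀ j : Fin (n+1), (A 0 j.succ).degree ≤ ((d+1 : ℕ) : WithBot ℕ)) ∧
  (∀ i : Fin (n+1), (A i.succ 0).degree ≤ ((d-1 : ℕ) : WithBot ℕ)) ∧
  (∀ i j : Fin (n+1), (A i.succ j.succ).degree ≤ (d : WithBot ℕ))

/-- The group `G_r`, `r = n+2`: block form `[[1, ᵗb₁x + ᵗb₀],[0, B]]` with `B ∈ GL_{r-1}(ℂ)`. -/
def Gr (n : ℕ) (g : Matrix (Fin (n+2)) (Fin (n+2)) (Polynomial ℂ)) : Prop :=
  g 0 0 = 1 ∧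
  (∀ i : Fin (n+1), g i.succ 0 = 0) ∧
  (∀ j : Fin (n+1), (g 0 j.succ).degree ≤ 1) ∧
  (∀ i j : Fin (n+1), (g i.succ j.succ).degree ≤ 0) ∧
  IsUnit g.det

/-- The block `u(x)` of `A(x)`. -/
def blkU (n : ℕ) (A : Matrix (Fin (n+2)) (Fin (n+2)) (Polynomial ℂ)) :
    Fin (n+1) → Polynomial ℂ := fun i => A i.succ 0

/-- The block `T(x)` of `A(x)`. -/
def blkT (n : ℕ) (A : Matrix (Fin (n+2)) (Fin (n+2)) (Polynomial ℂ)) :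
    Matrix (Fin (n+1)) (Fin (n+1)) (Polynomial ℂ) := Matrix.of fun i j => A i.succ j.succ

/-- `D(A(x); x) = (u(x), T(x)u(x), …, T(x)^{r−2}u(x))`. -/
def Dmat (n : ℕ) (A : Matrix (Fin (n+2)) (Fin (n+2)) (Polynomial ℂ)) :
    Matrix (Fin (n+1)) (Fin (n+1)) (Polynomial ℂ) :=
  Matrix.of fun i j => ((blkT n A ^ (j : ℕ)) *ᵥ blkU n A) i

/-- `D(A(x); c)`, evaluation at `x = c`. -/
def Dc (n : ℕ) (A : Matrix (Fin (n+2)) (Fin (n+2)) (Polynomial ℂ)) (c : ℂ) :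
    Matrix (Fin (n+1)) (Fin (n+1)) ℂ :=
  (Dmat n A).map (eval c)

/-- The lower shift matrix `τ`. -/
def tauMat (n : ℕ) : Matrix (Fin (n+1)) (Fin (n+1)) ℂ :=
  Matrix.of fun i j => if (i : ℕ) = (j : ℕ) + 1 then 1 else 0

/-- The vector `ν = ᵗ(1,0,…,0)`. -/
def nuVec (n : ℕ) : Fin (n+1) → ℂ := fun i => if (i : ℕ) = 0 then 1 else 0


lemma sum_mulVec' {K : Type*} [Field K] {m : ℕ} {ι : Type*} (s : Finset ι)
    (M : ι → Matrix (Fin m) (Fin m) K) (v : Fin m → K) :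
    (∑ j ∈ s, M j) *ᵥ v = ∑ j ∈ s, (M j *ᵥ v) :=
  map_sum (AddMonoidHom.mk' (fun N => N *ᵥ v) (fun a b => Matrix.add_mulVec a b v)) M s

set_option maxHeartbeats 1000000 in
set_option synthInstance.maxHeartbeats 400000 in
theorem stmt6' (n : ℕ)
    (A : Matrix (Fin (n+2)) (Fin (n+2)) (Polynomial ℂ))
    (hirr : Irreducible ((A.map (algebraMap (Polynomial ℂ) (RatFunc ℂ))).charpoly))
    (g : Matrix (Fin (n+2)) (Fin (n+2)) (Polynomial ℂ))
    (hg00 : g 0 0 = 1) (hgcol : ∀ i : Fin (n+1), g i.succ 0 = 0)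
    (hdet : IsUnit g.det)
    (hfix : g⁻¹ * A * g = A) :
    g = 1 := by
  classical
  set f := algebraMap (Polynomial ℂ) (RatFunc ℂ) with hf
  set B := A.map f with hBdef
  set h := g.map f with hhdef
  -- commutation
  have hcomm : g * A = A * g := by
    conv_lhs => rw [← hfix]
    rw [← Matrix.mul_assoc, ← Matrix.mul_assoc, Matrix.mul_nonsing_inv g hdet, Matrix.one_mul]
  have hcommB : h * B = B * h := by
    rw [hhdef, hBdef, ← Matrix.map_mul, ← Matrix.map_mul, hcomm]
  set e0 : Fin (n+2) → RatFunc ℂ := Pi.single 0 1 with he0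
  have he0ne : e0 0 = (1 : RatFunc ℂ) := by simp [he0]
  have hcol : h *ᵥ e0 = e0 := by
    rw [he0, Matrix.mulVec_single]
    funext i
    induction i using Fin.cases with
    | zero => simp [hhdef, Matrix.map_apply, hg00]
    | succ j => simp [hhdef, Matrix.map_apply, hgcol j, Pi.single_eq_of_ne (Fin.succ_ne_zero j)]
  have hsub : (h - 1) *ᵥ e0 = 0 := by
    rw [Matrix.sub_mulVec, hcol, Matrix.one_mulVec, sub_self]
  -- the ideal of polynomials killing e0
  set I : Ideal (Polynomial (RatFunc ℂ)) :=
    { carrier := {q | (aeval B q) *ᵥ e0 = 0}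
      zero_mem' := by simp [Matrix.zero_mulVec]
      add_mem' := by
        intro a b ha hb
        simp only [Set.mem_setOf_eq, map_add, Matrix.add_mulVec] at *
        rw [ha, hb, add_zero]
      smul_mem' := by
        intro c q hq
        simp only [Set.mem_setOf_eq, smul_eq_mul] at *
        rw [_root_.map_mul, ← Matrix.mulVec_mulVec, hq, Matrix.mulVec_zero] } with hIdef
  have hmemI : ∀ q : Polynomial (RatFunc ℂ), q ∈ I ↔ (aeval B q) *ᵥ e0 = 0 := fun q => Iff.rfl
  have hcp : B.charpoly ∈ I := by
    rw [hmemI, Matrix.aeval_self_charpoly, Matrix.zero_mulVec]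
  have key : ∀ p : Polynomial (RatFunc ℂ), (aeval B p) *ᵥ e0 = 0 → B.charpoly ∣ p := by
    intro p hp
    obtain ⟨q, hq⟩ := Submodule.IsPrincipal.principal I
    have hqd : q ∣ B.charpoly := by
      rw [hq, Ideal.submodule_span_eq, Ideal.mem_span_singleton] at hcp
      exact hcp
    obtain ⟨c, hc⟩ := hqd
    have hqp : q ∣ p := by
      have : p ∈ I := (hmemI p).mpr hp
      rw [hq, Ideal.submodule_span_eq, Ideal.mem_span_singleton] at this
      exact this
    rcases hirr.isUnit_or_isUnit hc with hu | hu
    · exfalso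
      have h1 : (1 : Polynomial (RatFunc ℂ)) ∈ I := by
        rw [hq, Ideal.submodule_span_eq, Ideal.mem_span_singleton]
        exact hu.dvd
      rw [hmemI, _root_.map_one, Matrix.one_mulVec] at h1
      have := congrFun h1 0
      rw [he0ne] at this
      exact one_ne_zero this
    · obtain ⟨u, rfl⟩ := hu
      exact dvd_trans ⟨↑u⁻¹, by rw [hc, Units.mul_inv_cancel_right]⟩ hqp
  -- linear independence of cyclic vectors
  have hdeg : B.charpoly.natDegree = n + 2 := by
    rw [Matrix.charpoly_natDegree_eq_dim, Fintype.card_fin]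
  set v : Fin (n+2) → (Fin (n+2) → RatFunc ℂ) := fun k => (B ^ (k : ℕ)) *ᵥ e0 with hv
  have hli : LinearIndependent (RatFunc ℂ) v := by
    rw [Fintype.linearIndependent_iff]
    intro c hc k
    set p : Polynomial (RatFunc ℂ) := ∑ j : Fin (n+2), Polynomial.monomial (j : ℕ) (c j) with hpdef
    have hpz : p = 0 := by
      by_contra hpz
      have hdvd : B.charpoly ∣ p := by
        apply key
        rw [hpdef, map_sum, sum_mulVec']
        rw [← hc]
        congr 1
        funext j
        rw [Polynomial.aeval_monomial, Algebra.algebraMap_eq_smul_one, smul_mul_assoc, one_mul,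
          Matrix.smul_mulVec]
      have h1 := Polynomial.natDegree_le_of_dvd hdvd hpz
      have h2 : p.natDegree ≤ n + 1 := by
        apply Polynomial.natDegree_sum_le_of_forall_le
        intro j _
        exact le_trans (Polynomial.natDegree_monomial_le _) (Nat.lt_succ_iff.mp j.isLt)
      omega
    have : p.coeff (k : ℕ) = c k := by
      rw [hpdef, Polynomial.finset_sum_coeff]
      rw [Finset.sum_eq_single k]
      · simp [Polynomial.coeff_monomial]
      · intro j _ hjk
        rw [Polynomial.coeff_monomial, if_neg (fun hh => hjk (Fin.val_injective hh))]
      · intro hk; exact absurd (Finset.mem_univ k) hk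
    rw [hpz, Polynomial.coeff_zero] at this
    exact this.symm
  have hspan : Submodule.span (RatFunc ℂ) (Set.range v) = ⊤ := by
    have hcard : Fintype.card (Fin (n+2)) =
        Module.finrank (RatFunc ℂ) (Fin (n+2) → RatFunc ℂ) := by
      rw [Module.finrank_pi, Fintype.card_fin]
    have := (basisOfLinearIndependentOfCardEqFinrank hli hcard).span_eq
    rwa [coe_basisOfLinearIndependentOfCardEqFinrank] at this
  -- (h-1) kills everything
  have hkill : ∀ k : Fin (n+2), (h - 1) *ᵥ v k = 0 := by
    intro k
    have hcpow : h * B ^ (k : ℕ) = B ^ (k : ℕ) * h :=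
      (Commute.pow_right hcommB (k : ℕ))
    have : (h - 1) * B ^ (k : ℕ) = B ^ (k : ℕ) * (h - 1) := by
      rw [sub_mul, mul_sub, one_mul, mul_one, hcpow]
    rw [hv]
    rw [Matrix.mulVec_mulVec, this, ← Matrix.mulVec_mulVec, hsub, Matrix.mulVec_zero]
  have hml : (h - 1).mulVecLin = (0 : Matrix _ _ _).mulVecLin := by
    apply LinearMap.ext_on hspan
    rintro x ⟨k, rfl⟩
    rw [Matrix.mulVecLin_apply, Matrix.mulVecLin_apply, hkill, Matrix.zero_mulVec]
  have hz : h - 1 = 0 := by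
    ext i j
    have h2 := congrFun (congrArg
      (fun L : (Fin (n+2) → RatFunc ℂ) →ₗ[RatFunc ℂ] (Fin (n+2) → RatFunc ℂ) =>
        L (Pi.single j 1)) hml) i
    simp only [Matrix.mulVecLin_apply, Matrix.mulVec_single, Matrix.zero_mulVec, mul_one] at h2
    simpa using h2
  have hh1 : h = 1 := by rwa [sub_eq_zero] at hz
  have hinj : Function.Injective f := IsFractionRing.injective (Polynomial ℂ) (RatFunc ℂ)
  refine Matrix.ext fun i j => hinj ?_
  have hentry : f (g i j) = (1 : Matrix (Fin (n+2)) (Fin (n+2)) (RatFunc ℂ)) i j := by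
    have := congrFun (congrFun hh1 i) j
    exact this
  rw [hentry, Matrix.one_apply, Matrix.one_apply, apply_ite f, _root_.map_one, _root_.map_zero]


/-- `G_r` acts freely on the set of `A(x)` whose characteristic polynomial
`det(y·I_r − A(x))` is irreducible over `ℂ(x)`. -/
theorem stmt6 (n : ℕ)
    (A : Matrix (Fin (n+2)) (Fin (n+2)) (Polynomial ℂ))
    (hirr : Irreducible ((A.map (algebraMap (Polynomial ℂ) (RatFunc ℂ))).charpoly))
    (g : Matrix (Fin (n+2)) (Fin (n+2)) (Polynomial ℂ)) (hg : Gr n g)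
    (hfix : g⁻¹ * A * g = A) :
    g = 1 :=
  stmt6' n A hirr g hg.1 hg.2.1 hg.2.2.2.2 hfix
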